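/- Let r ≥ 3 and suppose a_1,...,a_n affinely span ℝ^d with Gale transform g_1,...,g_n ∈ ℝ^{n-d-1}. Suppose I_1,...,I_r ⊆ [n] are pairwise disjoint and nonempty and there exist t_i > 0 (i ∈ ⊔_j I_j) with ∑_{i∈I_j} t_i = 1 for all j and ∑_{i∈I_1} t_i a_i = ... = ∑_{i∈I_r} t_i a_i. Then there exist vectors α_1,...,α_r ∈ ℝ^{n-d-1} with ∑_{j=1}^r α_j = 0, any r−1 of them linearly independent, such that for all i and j: ⟨α_j, g_i⟩ = t_i if i ∈ I_j, ⟨α_j, g_i⟩ = −t_i if i ∈ I_{j−1} (indices mod r), and ⟨α_j, g_i⟩ = 0 otherwise. -/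

import Mathlib

/-- The `(d+1) × n` matrix whose `j`-th column is `(a j, 1)`. -/
noncomputable def galeMatrix {K : Type*} [RCLike K] {d n : ℕ}
    (a : Fin n → Fin d → K) : Matrix (Fin (d + 1)) (Fin n) K :=
  fun i j => if h : (i : ℕ) < d then a j ⟨i, h⟩ else 1

/-- `g` is a Gale transform of `a`: there is a basis `b` of `ker A` such that
`(g j) i = conj ((b i) j)`. -/
def IsGaleTransform {K : Type*} [RCLike K] {d n : ℕ}
    (a : Fin n → Fin d → K) (g : Fin n → Fin (n - d - 1) → K) : Prop :=
  ∃ b : Fin (n - d - 1) → (Fin n → K),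
    (∀ i, (galeMatrix a).mulVecLin (b i) = 0) ∧
    LinearIndependent K b ∧
    Submodule.span K (Set.range b) = LinearMap.ker (galeMatrix a).mulVecLin ∧
    (∀ j i, g j i = starRingEnd K (b i j))

/-- a proper Tverberg `r`-partition yields vectors `α_j` summing to zero,
any `r-1` independent, with `⟨α_j, g_i⟩` equal to `t i`, `-t i`, `0` appropriately. -/
theorem stmt13 (r n d : ℕ) (hr : 3 ≤ r) [NeZero r]
    (a : Fin n → Fin d → ℝ) (g : Fin n → Fin (n - d - 1) → ℝ)
    (ha : affineSpan ℝ (Set.range a) = ⊤)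
    (hg : IsGaleTransform a g)
    (I : Fin r → Finset (Fin n))
    (hne : ∀ j, (I j).Nonempty)
    (hdisj : Pairwise (Function.onFun Disjoint I))
    (t : Fin n → ℝ) (ht : ∀ j, ∀ i ∈ I j, 0 < t i)
    (hsum1 : ∀ j, ∑ i ∈ I j, t i = 1)
    (heq : ∀ j, ∑ i ∈ I j, t i • a i = ∑ i ∈ I 0, t i • a i) :
    ∃ α : Fin r → (Fin (n - d - 1) → ℝ),
      ∑ j, α j = 0 ∧
      (∀ j : Fin r, LinearIndependent ℝ (fun k : {k : Fin r // k ≠ j} => α k)) ∧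
      ∀ j i,
        (i ∈ I j → ∑ k, α j k * g i k = t i) ∧
        (i ∈ I (j - 1) → ∑ k, α j k * g i k = - t i) ∧
        (i ∉ I j → i ∉ I (j - 1) → ∑ k, α j k * g i k = 0) := by
  obtain ⟨b, hb0, hbli, hbspan, hbg⟩ := hg
  -- the affine dependences
  set lam : Fin r → Fin n → ℝ := fun j i =>
    (if i ∈ I j then t i else 0) - (if i ∈ I (j - 1) then t i else 0) with hlam
  have hone : (1 : Fin r) ≠ 0 := by
    have h1 : 1 < r := lt_of_lt_of_le (by norm_num) hr
    simp [Fin.ext_iff, Fin.val_one, Nat.mod_eq_of_lt h1]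
  have hjne : ∀ j : Fin r, j - 1 ≠ j := by
    intro j h
    exact hone (sub_eq_self.mp h)
  have hdisj' : ∀ j : Fin r, Disjoint (I (j - 1)) (I j) :=
    fun j => hdisj (hjne j)
  -- key summation lemma
  have hsumlam : ∀ (j : Fin r) (f : Fin n → ℝ),
      ∑ i, lam j i * f i = ∑ i ∈ I j, t i * f i - ∑ i ∈ I (j - 1), t i * f i := by
    intro j f
    simp only [hlam, sub_mul, ite_mul, zero_mul]
    rw [Finset.sum_sub_distrib]
    congr 1 <;> rw [Finset.sum_ite_mem, Finset.univ_inter]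
  -- lam j is in the kernel
  have hker : ∀ j, (galeMatrix a).mulVecLin (lam j) = 0 := by
    intro j
    funext row
    simp only [Matrix.mulVecLin_apply, Matrix.mulVec, dotProduct, Pi.zero_apply]
    have hc : ∑ i, galeMatrix a row i * lam j i = ∑ i, lam j i * galeMatrix a row i := by
      simp [mul_comm]
    rw [hc, hsumlam]
    by_cases h : (row : ℕ) < d
    · have h1 : ∀ i, galeMatrix a row i = a i ⟨row, h⟩ := fun i => by
        simp [galeMatrix, h]
      have e1 := congrFun (heq j) ⟨row, h⟩
      have e2 := congrFun (heq (j - 1)) ⟨row, h⟩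
      simp only [Finset.sum_apply, Pi.smul_apply, smul_eq_mul] at e1 e2
      simp only [h1]
      rw [e1, e2, sub_self]
    · have h1 : ∀ i, galeMatrix a row i = 1 := fun i => by
        simp [galeMatrix, h]
      simp only [h1, mul_one]
      rw [hsum1 j, hsum1 (j - 1), sub_self]
  -- obtain coefficients α
  have hmem : ∀ j, lam j ∈ Submodule.span ℝ (Set.range b) := by
    intro j; rw [hbspan]; exact LinearMap.mem_ker.mpr (hker j)
  choose α hα using fun j => (Submodule.mem_span_range_iff_exists_fun ℝ).mp (hmem j)
  -- the dot product formula
  have hdot : ∀ j i, ∑ k, α j k * g i k = lam j i := by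
    intro j i
    have h := congrFun (hα j) i
    simp only [Finset.sum_apply, Pi.smul_apply, smul_eq_mul] at h
    calc ∑ k, α j k * g i k = ∑ k, α j k * b k i := by
          refine Finset.sum_congr rfl fun k _ => ?_
          rw [hbg i k]; simp
      _ = lam j i := h
  -- the lam's sum to zero
  have hlamsum : ∑ j, lam j = 0 := by
    funext i
    simp only [Finset.sum_apply, Pi.zero_apply, hlam]
    rw [Finset.sum_sub_distrib, sub_eq_zero]
    exact Fintype.sum_equiv (Equiv.addRight (1 : Fin r)) _ _ (fun j => by simp)
  have hαsum : ∑ j, α j = 0 := by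
    have h0 : ∑ k, (∑ j, α j k) • b k = 0 := by
      simp_rw [Finset.sum_smul]
      rw [Finset.sum_comm]
      calc ∑ j, ∑ k, α j k • b k = ∑ j, lam j := Finset.sum_congr rfl fun j _ => hα j
        _ = 0 := hlamsum
    have h1 := Fintype.linearIndependent_iff.mp hbli _ h0
    funext k
    simpa using h1 k
  -- linear independence of any r-1 of the α's
  have hli : ∀ j : Fin r, LinearIndependent ℝ (fun k : {k : Fin r // k ≠ j} => α k) := by
    intro j
    rw [Fintype.linearIndependent_iff]
    intro c hc k0
    set C : Fin r → ℝ := fun m => if h : m = j then 0 else c ⟨m, h⟩ with hCdef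
    have hCsub : ∀ k : {k : Fin r // k ≠ j}, C k.val = c k := by
      intro k; simp [hCdef, dif_neg k.prop]
    have hCα : ∑ m, C m • α m = 0 := by
      rw [Fintype.sum_eq_add_sum_compl j]
      have hCj : C j = 0 := by simp [hCdef]
      rw [hCj, zero_smul, zero_add,
        Finset.sum_subtype (p := fun k => k ≠ j) ({j}ᶜ : Finset (Fin r)) (fun x => by simp) (fun m => C m • α m)]
      calc ∑ k : {k : Fin r // k ≠ j}, C k.val • α k.val
          = ∑ k : {k : Fin r // k ≠ j}, c k • α k.val :=
            Finset.sum_congr rfl fun k _ => by rw [hCsub]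
        _ = 0 := hc
    have hCαk : ∀ k, ∑ m, C m * α m k = 0 := by
      intro k
      have := congrFun hCα k
      simpa using this
    have hClam : ∀ i, ∑ m, C m * lam m i = 0 := by
      intro i
      have e : ∀ m, lam m i = ∑ k, α m k * b k i := by
        intro m
        have h := congrFun (hα m) i
        simp only [Finset.sum_apply, Pi.smul_apply, smul_eq_mul] at h
        exact h.symm
      calc ∑ m, C m * lam m i = ∑ m, C m * ∑ k, α m k * b k i :=
            Finset.sum_congr rfl fun m _ => by rw [e m]
        _ = ∑ m, ∑ k, C m * (α m k * b k i) := by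
            simp_rw [Finset.mul_sum]
        _ = ∑ k, (∑ m, C m * α m k) * b k i := by
            rw [Finset.sum_comm]
            simp_rw [Finset.sum_mul, mul_assoc]
        _ = 0 := by simp [hCαk]
    -- the step relation
    have hstep : ∀ m0 : Fin r, C m0 = C (m0 + 1) := by
      intro m0
      obtain ⟨i, hi⟩ := hne m0
      have hti : 0 < t i := ht m0 i hi
      have hmemI : ∀ m : Fin r, i ∈ I m ↔ m = m0 := by
        intro m
        constructor
        · intro him
          by_contra hne'
          exact Finset.disjoint_left.mp (hdisj hne') him hi
        · rintro rfl; exact hi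
      have hlamval : ∀ m : Fin r, lam m i =
          (if m = m0 then t i else 0) - (if m = m0 + 1 then t i else 0) := by
        intro m
        have h2 : (i ∈ I (m - 1)) ↔ (m = m0 + 1) := by
          rw [hmemI (m - 1), sub_eq_iff_eq_add']
          constructor
          · intro h; rw [h]; open Fin.CommRing in ring
          · intro h; rw [h]; open Fin.CommRing in ring
        simp only [hlam]
        rw [if_congr (hmemI m) rfl rfl, if_congr h2 rfl rfl]
      have h0 := hClam i
      rw [Finset.sum_congr rfl (fun m _ => by rw [hlamval m])] at h0
      simp only [mul_sub, mul_ite, mul_zero] at h0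
      rw [Finset.sum_sub_distrib, Finset.sum_ite_eq' Finset.univ m0,
        Finset.sum_ite_eq' Finset.univ (m0 + 1)] at h0
      simp only [Finset.mem_univ, if_true] at h0
      have := sub_eq_zero.mp h0
      exact mul_right_cancel₀ (ne_of_gt hti) this
    open Fin.CommRing in
    have hzero : ∀ s : ℕ, C (j + (s : Fin r)) = 0 := by
      intro s
      induction s with
      | zero => simp [hCdef]
      | succ s ih =>
          have e : (((s + 1 : ℕ)) : Fin r) = (s : Fin r) + 1 := by push_cast; ring
          rw [e, ← add_assoc, ← hstep (j + (s : Fin r))]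
          exact ih
    open Fin.CommRing in
    have : C k0.val = 0 := by
      have e : (k0.val : Fin r) = j + (((k0.val - j : Fin r).val : ℕ) : Fin r) := by
        rw [Fin.cast_val_eq_self]; ring
      rw [e]; exact hzero _
    rw [← hCsub k0]
    exact this
  refine ⟨α, hαsum, hli, fun j i => ?_⟩
  have hd := hdot j i
  refine ⟨fun h1 => ?_, fun h2 => ?_, fun h1 h2 => ?_⟩
  · have h2 : i ∉ I (j - 1) := fun h2 => Finset.disjoint_left.mp (hdisj' j) h2 h1
    rw [hd]; simp [hlam, h1, h2]
  · have h1 : i ∉ I j := fun h1 => Finset.disjoint_left.mp (hdisj' j) h2 h1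
    rw [hd]; simp [hlam, h1, h2]
  · rw [hd]; simp [hlam, h1, h2]
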